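/- arXiv:2505.05264 — 2 statements merged into one kernel-verified Lean document; each statement's English description precedes it below -/
import Mathlib

section
/- Every subgraph of the 3-dimensional hypercube Q_3 with at least 10 edges contains the balanced double star S_{2,2} as a subgraph. -/
open SimpleGraph

/-- The `n`-dimensional hypercube: vertices are `{0,1}^n`, adjacent iff they
differ in exactly one coordinate (Hamming distance 1). -/
def cube (n : ℕ) : SimpleGraph (Fin n → Bool) where
  Adj x y := hammingDist x y = 1
  symm := ⟨fun x y h => by rwa [hammingDist_comm]⟩
  loopless := ⟨fun x h => by simp [hammingDist_self] at h⟩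

/-- The double star `S_{k,l}`: an edge `uv` (here `Sum.inl none` and
`Sum.inr none`) with `k` leaves attached to `u` and `l` further leaves
attached to `v`. -/
def doubleStar (k l : ℕ) : SimpleGraph (Option (Fin k) ⊕ Option (Fin l)) :=
  SimpleGraph.fromRel (fun a b =>
    (a = Sum.inl none ∧ b = Sum.inr none) ∨
    (a = Sum.inl none ∧ ∃ i, b = Sum.inl (some i)) ∨
    (a = Sum.inr none ∧ ∃ j, b = Sum.inr (some j)))

/-- `G` contains `H` as a (not necessarily induced) subgraph. -/
def Contains {α β : Type*} (G : SimpleGraph α) (H : SimpleGraph β) : Prop :=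
  ∃ f : β ↪ α, ∀ a b, H.Adj a b → G.Adj (f a) (f b)

/-- The Turán number of `H` in the hypercube `Q_n`: the maximum number of
edges of an `H`-free subgraph of `Q_n`. -/
noncomputable def exQ (n : ℕ) {β : Type*} (H : SimpleGraph β) : ℕ :=
  sSup {m | ∃ G : SimpleGraph (Fin n → Bool),
    G ≤ cube n ∧ ¬ Contains G H ∧ G.edgeSet.ncard = m}

/-- Number of coordinates equal to `1` (Hamming weight). -/
def wt {n : ℕ} (x : Fin n → Bool) : ℕ := hammingDist x (fun _ => false)

section Aux

set_option maxHeartbeats 1000000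
set_option maxRecDepth 10000

/-- A `Fin 8` model of the 3-cube. -/
def Q8 : SimpleGraph (Fin 8) := SimpleGraph.fromRel
  (fun i j => i.val ^^^ j.val = 1 ∨ i.val ^^^ j.val = 2 ∨ i.val ^^^ j.val = 4)

instance : DecidableRel Q8.Adj := fun x y => by unfold Q8; rw [fromRel_adj]; infer_instance

instance : DecidableRel (cube 3).Adj := fun x y => by unfold cube; infer_instance

instance (s : Set (Sym2 (Fin 8))) [DecidablePred (· ∈ s)] : DecidableRel (Q8.deleteEdges s).Adj :=
  fun _ _ => decidable_of_iff _ (SimpleGraph.deleteEdges_adj).symm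

/-- The explicit isomorphism between `Fin 8` and the cube's vertices. -/
def e8 : Fin 8 ≃ (Fin 3 → Bool) where
  toFun i := fun k => i.val.testBit k.val
  invFun x := ⟨(cond (x 0) 1 0) + (cond (x 1) 2 0) + (cond (x 2) 4 0), by
    cases x 0 <;> cases x 1 <;> cases x 2 <;> simp⟩
  left_inv := by decide
  right_inv := by decide

theorem adj_transfer : ∀ i j : Fin 8, Q8.Adj i j ↔ (cube 3).Adj (e8 i) (e8 j) := by decide

theorem cube_triangle_free : ∀ u v a : Fin 3 → Bool,
    (cube 3).Adj u v → (cube 3).Adj u a → (cube 3).Adj v a → False := by decide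

theorem cube_card : (cube 3).edgeFinset.card = 12 := by decide

/-- After removing any two edges from `Q8` there remains an edge both of
whose endpoints have degree at least 3. -/
theorem L8 : ∀ d1 ∈ Q8.edgeFinset, ∀ d2 ∈ Q8.edgeFinset,
    ∃ u v : Fin 8, (Q8.deleteEdges {d1, d2}).Adj u v ∧
    3 ≤ (Q8.deleteEdges {d1, d2}).degree u ∧ 3 ≤ (Q8.deleteEdges {d1, d2}).degree v := by
  decide

end Aux

/-- Building the double star from an edge with two extra neighbours on each side. -/
theorem contains_of_config (G : SimpleGraph (Fin 3 → Bool)) (u v a b c d : Fin 3 → Bool)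
    (huv : G.Adj u v) (hua : G.Adj u a) (hub : G.Adj u b) (hvc : G.Adj v c) (hvd : G.Adj v d)
    (hav : a ≠ v) (hbv : b ≠ v) (hcu : c ≠ u) (hdu : d ≠ u)
    (hab : a ≠ b) (hcd : c ≠ d) (hac : a ≠ c) (had : a ≠ d) (hbc : b ≠ c) (hbd : b ≠ d) :
    Contains G (doubleStar 2 2) := by
  have hau : a ≠ u := fun h => G.irrefl (h ▸ hua)
  have hbu : b ≠ u := fun h => G.irrefl (h ▸ hub)
  have hcv : c ≠ v := fun h => G.irrefl (h ▸ hvc)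
  have hdv : d ≠ v := fun h => G.irrefl (h ▸ hvd)
  have huvne : u ≠ v := huv.ne
  refine ⟨⟨fun x => match x with
    | Sum.inl none => u
    | Sum.inl (some i) => if i = 0 then a else b
    | Sum.inr none => v
    | Sum.inr (some j) => if j = 0 then c else d, ?_⟩, ?_⟩
  · rintro ((_ | i) | (_ | i)) ((_ | j) | (_ | j)) h <;>
      simp only [] at h <;>
      first
        | rfl
        | (fin_cases i <;> fin_cases j <;> simp_all)
        | (fin_cases i <;> simp_all)
        | (fin_cases j <;> simp_all)
        | simp_all
  · rintro x y ⟨hne, (⟨rfl, rfl⟩ | ⟨rfl, i, rfl⟩ | ⟨rfl, j, rfl⟩) |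
      (⟨rfl, rfl⟩ | ⟨rfl, i, rfl⟩ | ⟨rfl, j, rfl⟩)⟩
    · exact huv
    · fin_cases i
      · exact hua
      · exact hub
    · fin_cases j
      · exact hvc
      · exact hvd
    · exact huv.symm
    · fin_cases i
      · exact hua.symm
      · exact hub.symm
    · fin_cases j
      · exact hvc.symm
      · exact hvd.symm

/-- every subgraph of `Q_3` with at least 10 edges contains `S_{2,2}`. -/
theorem stmt1 (G : SimpleGraph (Fin 3 → Bool)) (hG : G ≤ cube 3)
    (he : 10 ≤ G.edgeSet.ncard) : Contains G (doubleStar 2 2) := by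
  classical
  have he' : 10 ≤ G.edgeFinset.card := by
    rwa [Set.ncard_eq_toFinset_card'] at he
  have hsub : G.edgeFinset ⊆ (cube 3).edgeFinset := edgeFinset_mono hG
  set D₀ := (cube 3).edgeFinset \ G.edgeFinset with hD₀def
  have hD₀card : D₀.card ≤ 2 := by
    rw [hD₀def, Finset.card_sdiff_of_subset hsub, cube_card]; omega
  have h2le : 2 ≤ (cube 3).edgeFinset.card := by rw [cube_card]; omega
  obtain ⟨D₁, hsub1, hsub2, hcard1⟩ :=
    Finset.exists_subsuperset_card_eq (Finset.sdiff_subset) hD₀card h2le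
  obtain ⟨d1, d2, hned, rfl⟩ := Finset.card_eq_two.mp hcard1
  have hd1 : d1 ∈ (cube 3).edgeFinset := hsub2 (by simp)
  have hd2 : d2 ∈ (cube 3).edgeFinset := hsub2 (by simp)
  have hmapMem : ∀ e ∈ (cube 3).edgeFinset, Sym2.map e8.symm e ∈ Q8.edgeFinset := by
    intro e heMem
    induction e using Sym2.ind with
    | _ x y =>
      rw [mem_edgeFinset, mem_edgeSet] at heMem
      rw [mem_edgeFinset, Sym2.map_pair_eq, mem_edgeSet]
      exact (adj_transfer _ _).mpr (by simpa using heMem)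
  obtain ⟨u', v', huv', hdu', hdv'⟩ := L8 _ (hmapMem d1 hd1) _ (hmapMem d2 hd2)
  have key : ∀ p q : Fin 8,
      (Q8.deleteEdges {Sym2.map e8.symm d1, Sym2.map e8.symm d2}).Adj p q →
      G.Adj (e8 p) (e8 q) := by
    intro p q hpq
    rw [deleteEdges_adj] at hpq
    obtain ⟨hq, hmem⟩ := hpq
    have hc : (cube 3).Adj (e8 p) (e8 q) := (adj_transfer p q).mp hq
    have hcm : s(e8 p, e8 q) ∈ (cube 3).edgeFinset := by
      rwa [mem_edgeFinset, mem_edgeSet]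
    have hnot : s(e8 p, e8 q) ∉ D₀ := by
      intro hmemD
      have hin := hsub1 hmemD
      simp only [Finset.mem_insert, Finset.mem_singleton] at hin
      apply hmem
      have hmap : Sym2.map e8.symm s(e8 p, e8 q) = s(p, q) := by
        rw [Sym2.map_pair_eq]; simp
      rw [← hmap]
      rcases hin with h | h <;> rw [h]
      · exact Set.mem_insert _ _
      · exact Set.mem_insert_of_mem _ rfl
    rw [← mem_edgeSet, ← mem_edgeFinset]
    by_contra hGn
    exact hnot (by rw [hD₀def]; exact Finset.mem_sdiff.mpr ⟨hcm, hGn⟩)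
  set u : Fin 3 → Bool := e8 u' with hu
  set v : Fin 3 → Bool := e8 v' with hv
  have hGuv : G.Adj u v := key u' v' huv'
  have hdegu : 3 ≤ (G.neighborFinset u).card := by
    refine le_trans hdu' (Finset.card_le_card_of_injOn e8 ?_ (e8.injective.injOn))
    intro w hw
    rw [Finset.mem_coe, mem_neighborFinset] at hw ⊢
    exact key u' w hw
  have hdegv : 3 ≤ (G.neighborFinset v).card := by
    refine le_trans hdv' (Finset.card_le_card_of_injOn e8 ?_ (e8.injective.injOn))
    intro w hw
    rw [Finset.mem_coe, mem_neighborFinset] at hw ⊢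
    exact key v' w hw
  have h2u : 1 < (G.neighborFinset u \ {v}).card := by
    have h := Finset.card_le_card_sdiff_add_card (s := G.neighborFinset u) (t := {v})
    simp only [Finset.card_singleton] at h
    omega
  have h2v : 1 < (G.neighborFinset v \ {u}).card := by
    have h := Finset.card_le_card_sdiff_add_card (s := G.neighborFinset v) (t := {u})
    simp only [Finset.card_singleton] at h
    omega
  obtain ⟨a, ha, b, hb, hab⟩ := Finset.one_lt_card.mp h2u
  obtain ⟨c, hc, d, hd, hcd⟩ := Finset.one_lt_card.mp h2v
  rw [Finset.mem_sdiff, mem_neighborFinset, Finset.mem_singleton] at ha hb hc hd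
  have cross : ∀ x y : Fin 3 → Bool, G.Adj u x → G.Adj v y → x ≠ y := by
    rintro x y hx hy rfl
    exact cube_triangle_free u v x (hG hGuv) (hG hx) (hG hy)
  exact contains_of_config G u v a b c d hGuv ha.1 hb.1 hc.1 hd.1
    ha.2 hb.2 hc.2 hd.2 hab hcd
    (cross a c ha.1 hc.1) (cross a d ha.1 hd.1) (cross b c hb.1 hc.1) (cross b d hb.1 hd.1)
end

section
/- Let n ≥ 3 and let G be an S_{n-1,n-1}-free subgraph of Q_n with the maximum number of edges among all such subgraphs. Then there exists an S_{n-1,n-1}-free subgraph G' of Q_n with e(G') = e(G) and minimum degree δ(G') ≥ n−1. -/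
open SimpleGraph

lemma ham_one {n : ℕ} {x y : Fin n → Bool} (h : hammingDist x y = 1) :
    ∃ i, x i ≠ y i ∧ ∀ k, k ≠ i → x k = y k := by
  rw [hammingDist, Finset.card_eq_one] at h
  obtain ⟨i, hi⟩ := h
  refine ⟨i, ?_, ?_⟩
  · have : i ∈ Finset.univ.filter fun j => x j ≠ y j := hi ▸ Finset.mem_singleton_self i
    simpa using this
  · intro k hk
    by_contra hne
    have : k ∈ Finset.univ.filter fun j => x j ≠ y j := by simpa using hne
    rw [hi, Finset.mem_singleton] at this
    exact hk this

lemma ham_one_of {n : ℕ} {x y : Fin n → Bool} (i : Fin n) (h1 : x i ≠ y i)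
    (h2 : ∀ k, k ≠ i → x k = y k) : hammingDist x y = 1 := by
  rw [hammingDist, Finset.card_eq_one]
  refine ⟨i, ?_⟩
  ext k
  simp only [Finset.mem_filter, Finset.mem_univ, true_and, Finset.mem_singleton]
  constructor
  · intro hk; by_contra hki; exact hk (h2 k hki)
  · rintro rfl; exact h1

lemma cube_triangle_free_s13 {n : ℕ} {x y z : Fin n → Bool}
    (hxy : (cube n).Adj x y) (hxz : (cube n).Adj x z) (hyz : (cube n).Adj y z) : False := by
  obtain ⟨i, hi1, hi2⟩ := ham_one (x := x) (y := y) hxy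
  obtain ⟨j, hj1, hj2⟩ := ham_one (x := x) (y := z) hxz
  obtain ⟨k, hk1, hk2⟩ := ham_one (x := y) (y := z) hyz
  by_cases hij : i = j
  · subst hij
    -- y = z
    have : y = z := by
      funext m
      by_cases hm : m = i
      · rw [hm]
        have h1 : y i = !(x i) := by revert hi1; cases x i <;> cases y i <;> simp
        have h2 : z i = !(x i) := by revert hj1; cases x i <;> cases z i <;> simp
        rw [h1, h2]
      · rw [← hi2 m hm, hj2 m hm]
    rw [this] at hyz
    exact (cube n).loopless.irrefl z hyz
  · -- y and z differ exactly at i and j, contradiction with card 1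
    have hyzi : y i ≠ z i := by rw [← hj2 i hij]; exact fun h => hi1 h.symm
    have hyzj : y j ≠ z j := by rw [← hi2 j (Ne.symm hij)]; exact hj1
    have hik : i = k := by by_contra h; exact hyzi (hk2 i h)
    have hjk : j = k := by by_contra h; exact hyzj (hk2 j h)
    exact hij (hik.trans hjk.symm)

/-- the flip map -/
def flip' {n : ℕ} (v : Fin n → Bool) (i : Fin n) : Fin n → Bool :=
  Function.update v i (!(v i))

lemma cube_adj_flip {n : ℕ} (v : Fin n → Bool) (i : Fin n) : (cube n).Adj v (flip' v i) := by
  show hammingDist v (flip' v i) = 1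
  apply ham_one_of i
  · simp [flip']
  · intro k hk; simp [flip', Function.update_of_ne hk]

lemma flip'_inj {n : ℕ} (v : Fin n → Bool) : Function.Injective (flip' v) := by
  intro i j hij
  by_contra hne
  have := congrFun hij i
  simp [flip', Function.update_of_ne (Ne.symm hne)] at this
  cases v i <;> simp_all

lemma cube_nbr_eq {n : ℕ} (v : Fin n → Bool) :
    (cube n).neighborSet v = Set.range (flip' v) := by
  ext y
  simp only [mem_neighborSet, Set.mem_range]
  constructor
  · intro h
    obtain ⟨i, hi1, hi2⟩ := ham_one (x := v) (y := y) h
    refine ⟨i, ?_⟩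
    funext k
    by_cases hk : k = i
    · subst hk; simp only [flip', Function.update_self]
      revert hi1; cases v k <;> cases y k <;> simp
    · rw [flip', Function.update_of_ne hk]; exact hi2 k hk
  · rintro ⟨i, rfl⟩; exact cube_adj_flip v i

lemma cube_deg {n : ℕ} (v : Fin n → Bool) : ((cube n).neighborSet v).ncard = n := by
  rw [cube_nbr_eq, ← Set.image_univ, Set.ncard_image_of_injective _ (flip'_inj v),
    Set.ncard_univ, Nat.card_eq_fintype_card, Fintype.card_fin]

lemma deg_le {n : ℕ} {G : SimpleGraph (Fin n → Bool)} (hG : G ≤ cube n) (v : Fin n → Bool) :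
    (G.neighborSet v).ncard ≤ n := by
  exact (Set.ncard_le_ncard (fun y hy => hG hy) (Set.toFinite _)).trans (le_of_eq (cube_deg v))

lemma deg_le_of_nonadj {n : ℕ} {G : SimpleGraph (Fin n → Bool)} (hG : G ≤ cube n)
    {u v : Fin n → Bool} (hc : (cube n).Adj u v) (hnc : ¬ G.Adj u v) :
    (G.neighborSet u).ncard ≤ n - 1 := by
  have hsub : G.neighborSet u ⊆ (cube n).neighborSet u \ {v} := by
    intro y hy
    refine ⟨hG hy, ?_⟩
    simp only [Set.mem_singleton_iff]
    rintro rfl; exact hnc hy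
  calc (G.neighborSet u).ncard ≤ ((cube n).neighborSet u \ {v}).ncard :=
        Set.ncard_le_ncard hsub (Set.toFinite _)
    _ = n - 1 := by
        have hmem : v ∈ (cube n).neighborSet u := hc
        rw [Set.ncard_diff_singleton_of_mem hmem, cube_deg]

lemma exists_inj_of_le_ncard {α : Type*} {s : Set α} {k : ℕ} (h : k ≤ s.ncard)
    (hfin : s.Finite) : ∃ g : Fin k → α, Function.Injective g ∧ ∀ i, g i ∈ s := by
  classical
  rw [Set.ncard_eq_toFinset_card _ hfin] at h
  obtain ⟨t, hts, htc⟩ := Finset.exists_subset_card_eq h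
  refine ⟨fun i => ((Finset.equivFinOfCardEq htc).symm i).1, ?_, ?_⟩
  · intro i j hij
    exact (Finset.equivFinOfCardEq htc).symm.injective (Subtype.ext hij)
  · intro i
    have := hts ((Finset.equivFinOfCardEq htc).symm i).2
    rwa [Set.Finite.mem_toFinset] at this

lemma contains_iff {n : ℕ} (hn : 3 ≤ n) {G : SimpleGraph (Fin n → Bool)} (hG : G ≤ cube n) :
    Contains G (doubleStar (n - 1) (n - 1)) ↔
      ∃ a b, G.Adj a b ∧ n ≤ (G.neighborSet a).ncard ∧ n ≤ (G.neighborSet b).ncard := by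
  constructor
  · rintro ⟨f, hf⟩
    set a := f (Sum.inl none) with ha
    set b := f (Sum.inr none) with hb
    have hab : G.Adj a b := by
      apply hf
      rw [doubleStar, fromRel_adj]
      exact ⟨by simp, Or.inl (Or.inl ⟨rfl, rfl⟩)⟩
    refine ⟨a, b, hab, ?_, ?_⟩
    · -- injection Option (Fin (n-1)) → neighborSet a
      set g : Option (Fin (n - 1)) → (Fin n → Bool) := fun o =>
        match o with
        | none => b
        | some i => f (Sum.inl (some i)) with hg
      have hginj : Function.Injective g := by
        intro o1 o2 h
        match o1, o2 with
        | none, none => rfl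
        | some i, some j => simpa using f.injective h
        | none, some j => exact absurd (f.injective h.symm) (by simp)
        | some i, none => exact absurd (f.injective h) (by simp)
      have hgsub : Set.range g ⊆ G.neighborSet a := by
        rintro y ⟨o, rfl⟩
        match o with
        | none => exact hab
        | some i =>
          apply hf
          rw [doubleStar, fromRel_adj]
          exact ⟨by simp, Or.inl (Or.inr (Or.inl ⟨rfl, i, rfl⟩))⟩
      have := Set.ncard_le_ncard hgsub (Set.toFinite _)
      rw [← Set.image_univ, Set.ncard_image_of_injective _ hginj, Set.ncard_univ,
        Nat.card_eq_fintype_card] at this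
      simpa [Nat.sub_add_cancel (by omega : 1 ≤ n)] using this
    · set g : Option (Fin (n - 1)) → (Fin n → Bool) := fun o =>
        match o with
        | none => a
        | some i => f (Sum.inr (some i)) with hg
      have hginj : Function.Injective g := by
        intro o1 o2 h
        match o1, o2 with
        | none, none => rfl
        | some i, some j => simpa using f.injective h
        | none, some j => exact absurd (f.injective h.symm) (by simp)
        | some i, none => exact absurd (f.injective h) (by simp)
      have hgsub : Set.range g ⊆ G.neighborSet b := by
        rintro y ⟨o, rfl⟩
        match o with
        | none => exact hab.symm
        | some i =>
          apply hf
          rw [doubleStar, fromRel_adj]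
          exact ⟨by simp, Or.inl (Or.inr (Or.inr ⟨rfl, i, rfl⟩))⟩
      have := Set.ncard_le_ncard hgsub (Set.toFinite _)
      rw [← Set.image_univ, Set.ncard_image_of_injective _ hginj, Set.ncard_univ,
        Nat.card_eq_fintype_card] at this
      simpa [Nat.sub_add_cancel (by omega : 1 ≤ n)] using this
  · rintro ⟨a, b, hab, hda, hdb⟩
    -- get injections into the punctured neighborhoods
    have hsa : n - 1 ≤ (G.neighborSet a \ {b}).ncard := by
      have hmem : b ∈ G.neighborSet a := hab
      rw [Set.ncard_diff_singleton_of_mem hmem]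
      omega
    have hsb : n - 1 ≤ (G.neighborSet b \ {a}).ncard := by
      have hmem : a ∈ G.neighborSet b := hab.symm
      rw [Set.ncard_diff_singleton_of_mem hmem]
      omega
    obtain ⟨g, hginj, hgmem⟩ := exists_inj_of_le_ncard hsa (Set.toFinite _)
    obtain ⟨h, hhinj, hhmem⟩ := exists_inj_of_le_ncard hsb (Set.toFinite _)
    have hane : a ≠ b := hab.ne
    have hga : ∀ i, g i ≠ a := fun i he => G.irrefl (show G.Adj a a from he ▸ (hgmem i).1)
    have hgb : ∀ i, g i ≠ b := fun i => by have := (hgmem i).2; simpa using this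
    have hha : ∀ j, h j ≠ a := fun j => by have := (hhmem j).2; simpa using this
    have hhb : ∀ j, h j ≠ b := fun j he => G.irrefl (show G.Adj b b from he ▸ (hhmem j).1)
    have hgh : ∀ i j, g i ≠ h j := by
      intro i j he
      have h1 : G.Adj a (g i) := (hgmem i).1
      have h2 : G.Adj b (g i) := by rw [he]; exact (hhmem j).1
      exact cube_triangle_free_s13 (hG hab) (hG h1) (hG h2)
    set F : Option (Fin (n - 1)) ⊕ Option (Fin (n - 1)) → (Fin n → Bool) :=
      Sum.elim (fun o => match o with | none => a | some i => g i)
        (fun o => match o with | none => b | some j => h j) with hF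
    have hFinj : Function.Injective F := by
      rintro ((_ | i) | (_ | i)) ((_ | j) | (_ | j)) hpq <;>
        simp only [hF, Sum.elim_inl, Sum.elim_inr] at hpq
      · rfl
      · exact absurd hpq.symm (hga j)
      · exact absurd hpq hane
      · exact absurd hpq.symm (hha j)
      · exact absurd hpq (hga i)
      · rw [hginj hpq]
      · exact absurd hpq (hgb i)
      · exact absurd hpq (hgh i j)
      · exact absurd hpq.symm hane
      · exact absurd hpq.symm (hgb j)
      · rfl
      · exact absurd hpq.symm (hhb j)
      · exact absurd hpq (hha i)
      · exact absurd hpq.symm (hgh j i)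
      · exact absurd hpq (hhb i)
      · rw [hhinj hpq]
    refine ⟨⟨F, hFinj⟩, ?_⟩
    intro p q hpq
    rw [doubleStar, fromRel_adj] at hpq
    obtain ⟨hne, hrel | hrel⟩ := hpq <;>
      rcases hrel with ⟨h1, h2⟩ | ⟨h1, i, h2⟩ | ⟨h1, j, h2⟩ <;> subst h1 <;> subst h2 <;>
      simp only [Function.Embedding.coeFn_mk, hF, Sum.elim_inl, Sum.elim_inr]
    · exact hab
    · exact (hgmem i).1
    · exact (hhmem j).1
    · exact hab.symm
    · exact ((hgmem i).1).symm
    · exact ((hhmem j).1).symm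


section Ops
variable {α : Type*}

/-- add edge uv -/
def addE (G : SimpleGraph α) (u v : α) : SimpleGraph α where
  Adj a b := G.Adj a b ∨ (((a = u ∧ b = v) ∨ (a = v ∧ b = u)) ∧ a ≠ b)
  symm := by
    constructor
    intro a b hab
    rcases hab with hab | ⟨hab, hne⟩
    · exact Or.inl hab.symm
    · exact Or.inr ⟨hab.symm.imp (fun h => ⟨h.2, h.1⟩) (fun h => ⟨h.2, h.1⟩), hne.symm⟩
  loopless := by
    constructor
    intro a hab
    rcases hab with hab | ⟨hab, hne⟩
    · exact G.irrefl hab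
    · exact hne rfl

/-- remove edge ux, add edge uv -/
def swapE (G : SimpleGraph α) (u v x : α) : SimpleGraph α where
  Adj a b := (G.Adj a b ∧ ¬(a = u ∧ b = x) ∧ ¬(a = x ∧ b = u)) ∨
    (((a = u ∧ b = v) ∨ (a = v ∧ b = u)) ∧ a ≠ b)
  symm := by
    constructor
    intro a b hab
    rcases hab with ⟨hab, h1, h2⟩ | ⟨hab, hne⟩
    · exact Or.inl ⟨hab.symm, fun h => h2 ⟨h.2, h.1⟩, fun h => h1 ⟨h.2, h.1⟩⟩
    · exact Or.inr ⟨hab.symm.imp (fun h => ⟨h.2, h.1⟩) (fun h => ⟨h.2, h.1⟩), hne.symm⟩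
  loopless := by
    constructor
    intro a hab
    rcases hab with ⟨hab, _, _⟩ | ⟨hab, hne⟩
    · exact G.irrefl hab
    · exact hne rfl

lemma addE_edgeSet (G : SimpleGraph α) {u v : α} (huv : u ≠ v) :
    (addE G u v).edgeSet = insert s(u, v) G.edgeSet := by
  ext e
  induction e using Sym2.ind with
  | _ a b =>
    rw [mem_edgeSet]
    show (G.Adj a b ∨ _) ↔ _
    rw [Set.mem_insert_iff, mem_edgeSet, Sym2.eq_iff]
    constructor
    · rintro (hab | ⟨hab, hne⟩)
      · exact Or.inr hab
      · exact Or.inl hab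
    · rintro (hab | hab)
      · refine Or.inr ⟨hab, ?_⟩
        rcases hab with ⟨rfl, rfl⟩ | ⟨rfl, rfl⟩
        · exact huv
        · exact huv.symm
      · exact Or.inl hab

lemma swapE_edgeSet (G : SimpleGraph α) {u v x : α} (huv : u ≠ v) :
    (swapE G u v x).edgeSet = insert s(u, v) (G.edgeSet \ {s(u, x)}) := by
  ext e
  induction e using Sym2.ind with
  | _ a b =>
    rw [mem_edgeSet]
    show ((G.Adj a b ∧ _ ∧ _) ∨ _) ↔ _
    rw [Set.mem_insert_iff, Set.mem_diff, mem_edgeSet, Set.mem_singleton_iff, Sym2.eq_iff,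
      Sym2.eq_iff]
    constructor
    · rintro (⟨hab, h1, h2⟩ | ⟨hab, hne⟩)
      · exact Or.inr ⟨hab, by tauto⟩
      · exact Or.inl hab
    · rintro (hab | ⟨hab, hux⟩)
      · refine Or.inr ⟨hab, ?_⟩
        rcases hab with ⟨rfl, rfl⟩ | ⟨rfl, rfl⟩
        · exact huv
        · exact huv.symm
      · exact Or.inl ⟨hab, by tauto⟩

lemma addE_nbr_of_ne (G : SimpleGraph α) (u v : α) {w : α} (hwu : w ≠ u) (hwv : w ≠ v) :
    (addE G u v).neighborSet w = G.neighborSet w := by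
  ext y
  show (G.Adj w y ∨ _) ↔ G.Adj w y
  constructor
  · rintro (hy | ⟨hy, _⟩)
    · exact hy
    · rcases hy with ⟨rfl, _⟩ | ⟨rfl, _⟩ <;> simp_all
  · exact Or.inl

lemma addE_nbr_u (G : SimpleGraph α) {u v : α} (huv : u ≠ v) :
    (addE G u v).neighborSet u = insert v (G.neighborSet u) := by
  ext y
  show (G.Adj u y ∨ _) ↔ _
  rw [Set.mem_insert_iff]
  constructor
  · rintro (hy | ⟨hy, hne⟩)
    · exact Or.inr hy
    · rcases hy with ⟨_, rfl⟩ | ⟨rfl, rfl⟩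
      · exact Or.inl rfl
      · exact absurd rfl hne
  · rintro (rfl | hy)
    · exact Or.inr ⟨Or.inl ⟨rfl, rfl⟩, huv⟩
    · exact Or.inl hy

lemma addE_nbr_v (G : SimpleGraph α) {u v : α} (huv : u ≠ v) :
    (addE G u v).neighborSet v = insert u (G.neighborSet v) := by
  ext y
  show (G.Adj v y ∨ _) ↔ _
  rw [Set.mem_insert_iff]
  constructor
  · rintro (hy | ⟨hy, hne⟩)
    · exact Or.inr hy
    · rcases hy with ⟨rfl, rfl⟩ | ⟨_, rfl⟩
      · exact absurd rfl hne
      · exact Or.inl rfl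
  · rintro (rfl | hy)
    · exact Or.inr ⟨Or.inr ⟨rfl, rfl⟩, huv.symm⟩
    · exact Or.inl hy

lemma addE_le {G : SimpleGraph α} {H : SimpleGraph α} (hGH : G ≤ H) {u v : α}
    (huv : H.Adj u v) : addE G u v ≤ H := by
  intro a b hab
  rcases hab with hab | ⟨hab, hne⟩
  · exact hGH hab
  · rcases hab with ⟨rfl, rfl⟩ | ⟨rfl, rfl⟩
    · exact huv
    · exact huv.symm

end Ops

section Ops2
variable {α : Type*} {G : SimpleGraph α} {u v x : α}

lemma swapE_adj {a b : α} : (swapE G u v x).Adj a b ↔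
    (G.Adj a b ∧ ¬(a = u ∧ b = x) ∧ ¬(a = x ∧ b = u)) ∨
    (((a = u ∧ b = v) ∨ (a = v ∧ b = u)) ∧ a ≠ b) := Iff.rfl

lemma swapE_nbr_of_ne {w : α} (hwu : w ≠ u) (hwv : w ≠ v) (hwx : w ≠ x) :
    (swapE G u v x).neighborSet w = G.neighborSet w := by
  ext y
  rw [mem_neighborSet, swapE_adj]
  constructor
  · rintro (⟨hy, _, _⟩ | ⟨hy, _⟩)
    · exact hy
    · rcases hy with ⟨rfl, _⟩ | ⟨rfl, _⟩ <;> simp_all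
  · intro hy
    exact Or.inl ⟨hy, fun h => hwu h.1, fun h => hwx h.1⟩

lemma swapE_nbr_u (huv : u ≠ v) (hux : u ≠ x) :
    (swapE G u v x).neighborSet u = insert v (G.neighborSet u \ {x}) := by
  ext y
  rw [mem_neighborSet, swapE_adj, Set.mem_insert_iff, Set.mem_diff, mem_neighborSet,
    Set.mem_singleton_iff]
  constructor
  · rintro (⟨hy, h1, h2⟩ | ⟨hy, hne⟩)
    · exact Or.inr ⟨hy, fun h => h1 ⟨rfl, h⟩⟩
    · rcases hy with ⟨_, rfl⟩ | ⟨rfl, rfl⟩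
      · exact Or.inl rfl
      · exact absurd rfl hne
  · rintro (rfl | ⟨hy, hyx⟩)
    · exact Or.inr ⟨Or.inl ⟨rfl, rfl⟩, huv⟩
    · exact Or.inl ⟨hy, fun h => hyx h.2, fun h => hux h.1⟩

lemma swapE_nbr_v (huv : u ≠ v) (hvx : v ≠ x) :
    (swapE G u v x).neighborSet v = insert u (G.neighborSet v) := by
  ext y
  rw [mem_neighborSet, swapE_adj, Set.mem_insert_iff, mem_neighborSet]
  constructor
  · rintro (⟨hy, _, _⟩ | ⟨hy, hne⟩)
    · exact Or.inr hy
    · rcases hy with ⟨rfl, rfl⟩ | ⟨_, rfl⟩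
      · exact absurd rfl hne
      · exact Or.inl rfl
  · rintro (rfl | hy)
    · exact Or.inr ⟨Or.inr ⟨rfl, rfl⟩, huv.symm⟩
    · exact Or.inl ⟨hy, fun h => huv.symm h.1, fun h => hvx h.1⟩

lemma swapE_nbr_x (hux : u ≠ x) (hvx : v ≠ x) :
    (swapE G u v x).neighborSet x = G.neighborSet x \ {u} := by
  ext y
  rw [mem_neighborSet, swapE_adj, Set.mem_diff, mem_neighborSet, Set.mem_singleton_iff]
  constructor
  · rintro (⟨hy, h1, h2⟩ | ⟨hy, hne⟩)
    · exact ⟨hy, fun h => h2 ⟨rfl, h⟩⟩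
    · rcases hy with ⟨rfl, _⟩ | ⟨rfl, _⟩
      · exact absurd rfl hux
      · exact absurd rfl hvx
  · rintro ⟨hy, hyu⟩
    exact Or.inl ⟨hy, fun h => hux h.1.symm, fun h => hyu h.2⟩

lemma swapE_le {H : SimpleGraph α} (hGH : G ≤ H) (huv : H.Adj u v) : swapE G u v x ≤ H := by
  intro a b hab
  rcases hab with ⟨hab, _, _⟩ | ⟨hab, hne⟩
  · exact hGH hab
  · rcases hab with ⟨rfl, rfl⟩ | ⟨rfl, rfl⟩
    · exact huv
    · exact huv.symm

end Ops2

lemma main_step {n : ℕ} (hn : 3 ≤ n) (B : ℕ)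
    (hmax : ∀ G'' : SimpleGraph (Fin n → Bool), G'' ≤ cube n →
      ¬ Contains G'' (doubleStar (n - 1) (n - 1)) → G''.edgeSet.ncard ≤ B) :
    ∀ m : ℕ, ∀ G : SimpleGraph (Fin n → Bool), G ≤ cube n →
      ¬ Contains G (doubleStar (n - 1) (n - 1)) → G.edgeSet.ncard = B →
      (∑ w : Fin n → Bool, (n - 1 - (G.neighborSet w).ncard)) ≤ m →
      ∃ G' : SimpleGraph (Fin n → Bool), G' ≤ cube n ∧
        ¬ Contains G' (doubleStar (n - 1) (n - 1)) ∧ G'.edgeSet.ncard = B ∧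
        ∀ w, n - 1 ≤ (G'.neighborSet w).ncard := by
  intro m
  induction m with
  | zero =>
    intro G hG hfree hB hsum
    refine ⟨G, hG, hfree, hB, fun w => ?_⟩
    have h1 : (n - 1 - (G.neighborSet w).ncard) ≤ 0 := by
      refine le_trans ?_ hsum
      exact Finset.single_le_sum (f := fun w => n - 1 - (G.neighborSet w).ncard)
        (fun _ _ => Nat.zero_le _) (Finset.mem_univ w)
    omega
  | succ m ih =>
    intro G hG hfree hB hsum
    by_cases hall : ∀ w, n - 1 ≤ (G.neighborSet w).ncard
    · exact ⟨G, hG, hfree, hB, hall⟩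
    push_neg at hall
    obtain ⟨v, hv⟩ := hall
    -- find u : cube-neighbor of v not G-adjacent
    obtain ⟨u, hcuv, hnuv⟩ : ∃ u, (cube n).Adj u v ∧ ¬ G.Adj u v := by
      by_contra hcon
      push_neg at hcon
      have hsub : (cube n).neighborSet v ⊆ G.neighborSet v := by
        intro y hy
        exact (hcon y (((cube n).adj_symm hy))).symm
      have := Set.ncard_le_ncard hsub (Set.toFinite _)
      rw [cube_deg] at this
      omega
    have huv : u ≠ v := hcuv.ne
    have hvu_mem : u ∉ G.neighborSet v := fun h => hnuv ((G.adj_symm h))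
    have huv_mem : v ∉ G.neighborSet u := fun h => hnuv h
    -- G1 = G + uv has more edges, hence contains the double star
    set G1 := addE G u v with hG1
    have hG1le : G1 ≤ cube n := addE_le hG hcuv
    have hnotmem : s(u, v) ∉ G.edgeSet := fun h => hnuv h
    have hG1card : G1.edgeSet.ncard = B + 1 := by
      rw [hG1, addE_edgeSet G huv, Set.ncard_insert_of_notMem hnotmem (Set.toFinite _), hB]
    have hG1contains : Contains G1 (doubleStar (n - 1) (n - 1)) := by
      by_contra hc
      have := hmax G1 hG1le hc
      omega
    rw [contains_iff hn hG1le] at hG1contains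
    obtain ⟨a, b, hab1, hda, hdb⟩ := hG1contains
    -- degree of v in G1 is small
    have hd1v : (G1.neighborSet v).ncard = (G.neighborSet v).ncard + 1 := by
      rw [hG1, addE_nbr_v G huv, Set.ncard_insert_of_notMem hvu_mem (Set.toFinite _)]
    have hdGu : (G.neighborSet u).ncard ≤ n - 1 := deg_le_of_nonadj hG hcuv hnuv
    have hav : a ≠ v := by rintro rfl; omega
    have hbv : b ≠ v := by rintro rfl; omega
    have hgood : ∀ c, c ≠ u → c ≠ v → n ≤ (G1.neighborSet c).ncard →
        n ≤ (G.neighborSet c).ncard := by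
      intro c hcu hcv hc
      rwa [hG1, addE_nbr_of_ne G u v hcu hcv] at hc
    -- extract x
    obtain ⟨x, hux_adj, hxv, hdx⟩ : ∃ x, G.Adj u x ∧ x ≠ v ∧ n ≤ (G.neighborSet x).ncard := by
      by_cases hau : a = u
      · have hbu : b ≠ u := fun h => hab1.ne' (h.trans hau.symm)
        refine ⟨b, ?_, hbv, hgood b hbu hbv hdb⟩
        rcases hab1 with h | ⟨h, _⟩
        · rw [← hau]; exact h
        · rcases h with ⟨h1, h2⟩ | ⟨h1, h2⟩
          · exact absurd h2 hbv
          · exact absurd h1 hav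
      · by_cases hbu : b = u
        · refine ⟨a, ?_, hav, hgood a hau hav hda⟩
          rcases hab1 with h | ⟨h, _⟩
          · rw [← hbu]; exact h.symm
          · rcases h with ⟨h1, h2⟩ | ⟨h1, h2⟩
            · exact absurd h1 hau
            · exact absurd h1 hav
        · exfalso
          apply hfree
          rw [contains_iff hn hG]
          have habG : G.Adj a b := by
            rcases hab1 with h | ⟨h, _⟩
            · exact h
            · rcases h with ⟨h1, h2⟩ | ⟨h1, h2⟩
              · exact absurd h1 hau
              · exact absurd h1 hav
          exact ⟨a, b, habG, hgood a hau hav hda, hgood b hbu hbv hdb⟩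
    have hux : u ≠ x := hux_adj.ne
    have hx_mem : x ∈ G.neighborSet u := hux_adj
    have hu_memx : u ∈ G.neighborSet x := hux_adj.symm
    -- G2 = G - ux + uv
    set G2 := swapE G u v x with hG2
    have hG2le : G2 ≤ cube n := swapE_le hG hcuv
    have hG2card : G2.edgeSet.ncard = B := by
      rw [hG2, swapE_edgeSet G huv]
      have h1 : s(u, v) ∉ G.edgeSet \ {s(u, x)} := fun h => hnuv h.1
      rw [Set.ncard_insert_of_notMem h1 (Set.toFinite _),
        Set.ncard_diff_singleton_of_mem (by exact hux_adj)]
      have : 0 < G.edgeSet.ncard :=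
        (Set.ncard_pos (Set.toFinite _)).mpr ⟨s(u, x), hux_adj⟩
      omega
    -- degrees in G2
    have hd2u : (G2.neighborSet u).ncard = (G.neighborSet u).ncard := by
      rw [hG2, swapE_nbr_u huv hux]
      have h1 : v ∉ G.neighborSet u \ {x} := fun h => huv_mem h.1
      rw [Set.ncard_insert_of_notMem h1 (Set.toFinite _),
        Set.ncard_diff_singleton_of_mem hx_mem]
      have : 0 < (G.neighborSet u).ncard := (Set.ncard_pos (Set.toFinite _)).mpr ⟨x, hx_mem⟩
      omega
    have hd2v : (G2.neighborSet v).ncard = (G.neighborSet v).ncard + 1 := by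
      rw [hG2, swapE_nbr_v huv (Ne.symm hxv), Set.ncard_insert_of_notMem hvu_mem
        (Set.toFinite _)]
    have hd2x : (G2.neighborSet x).ncard = (G.neighborSet x).ncard - 1 := by
      rw [hG2, swapE_nbr_x hux (Ne.symm hxv),
        Set.ncard_diff_singleton_of_mem hu_memx]
    have hd2w : ∀ w, w ≠ u → w ≠ v → w ≠ x →
        (G2.neighborSet w).ncard = (G.neighborSet w).ncard := by
      intro w h1 h2 h3
      rw [hG2, swapE_nbr_of_ne h1 h2 h3]
    have hdxle : (G.neighborSet x).ncard ≤ n := deg_le hG x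
    -- G2 is double-star-free
    have hG2free : ¬ Contains G2 (doubleStar (n - 1) (n - 1)) := by
      rw [contains_iff hn hG2le]
      rintro ⟨a', b', hab', hda', hdb'⟩
      have hne : ∀ c, n ≤ ((G2.neighborSet c).ncard) → c ≠ u ∧ c ≠ v ∧ c ≠ x := by
        intro c hc
        refine ⟨?_, ?_, ?_⟩ <;> rintro rfl <;> omega
      obtain ⟨hau', hav', hax'⟩ := hne a' hda'
      obtain ⟨hbu', hbv', hbx'⟩ := hne b' hdb'
      have habG : G.Adj a' b' := by
        rcases hab' with ⟨h, _, _⟩ | ⟨h, _⟩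
        · exact h
        · rcases h with ⟨rfl, _⟩ | ⟨rfl, _⟩
          · exact absurd rfl hau'
          · exact absurd rfl hav'
      apply hfree
      rw [contains_iff hn hG]
      exact ⟨a', b', habG, by rw [← hd2w a' hau' hav' hax']; exact hda',
        by rw [← hd2w b' hbu' hbv' hbx']; exact hdb'⟩
    -- the deficiency strictly decreases
    have hsum2 : (∑ w : Fin n → Bool, (n - 1 - (G2.neighborSet w).ncard)) <
        (∑ w : Fin n → Bool, (n - 1 - (G.neighborSet w).ncard)) := by
      apply Finset.sum_lt_sum
      · intro w _
        by_cases h1 : w = u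
        · subst h1; rw [hd2u]
        · by_cases h2 : w = v
          · subst h2; rw [hd2v]; omega
          · by_cases h3 : w = x
            · subst h3; rw [hd2x]; omega
            · rw [hd2w w h1 h2 h3]
      · exact ⟨v, Finset.mem_univ v, by rw [hd2v]; omega⟩
    exact ih G2 hG2le hG2free hG2card (by omega)

/-- an edge-maximum `S_{n-1,n-1}`-free subgraph of `Q_n` (`n ≥ 3`)
can be replaced by one with the same number of edges and minimum degree `≥ n-1`. -/
theorem stmt13 (n : ℕ) (hn : 3 ≤ n) (G : SimpleGraph (Fin n → Bool))
    (hG : G ≤ cube n) (hfree : ¬ Contains G (doubleStar (n - 1) (n - 1)))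
    (hmax : ∀ G'' : SimpleGraph (Fin n → Bool), G'' ≤ cube n →
      ¬ Contains G'' (doubleStar (n - 1) (n - 1)) →
      G''.edgeSet.ncard ≤ G.edgeSet.ncard) :
    ∃ G' : SimpleGraph (Fin n → Bool), G' ≤ cube n ∧
      ¬ Contains G' (doubleStar (n - 1) (n - 1)) ∧
      G'.edgeSet.ncard = G.edgeSet.ncard ∧
      ∀ v, n - 1 ≤ (G'.neighborSet v).ncard := by
  exact main_step hn G.edgeSet.ncard hmax
    (∑ w : Fin n → Bool, (n - 1 - (G.neighborSet w).ncard)) G hG hfree rfl le_rfl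
end
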